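/- Let M ⊆ ℍ^d be a totally geodesic submanifold and let x, y ∈ ℍ^d satisfy d_ℍ(x,M) ≥ r and d_ℍ(y,M) ≥ r for some r ≥ 0. Let d = d_ℍ(x,y) and d′ = d_ℍ(π^G_M(x), π^G_M(y)). Then sinh(d′/2) ≤ sinh(d/2) / cosh(r). -/

import Mathlib

noncomputable section

open Set

/-- Ambient Euclidean space `ℝ^d`. -/
abbrev E (d : ℕ) : Type := EuclideanSpace ℝ (Fin d)

/-- The open unit (Poincaré) ball `ℍ^d`. -/
def pball (d : ℕ) : Set (E d) := {x | ‖x‖ < 1}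

/-- Inverse hyperbolic cosine. -/
def arcosh (t : ℝ) : ℝ := Real.log (t + Real.sqrt (t ^ 2 - 1))

/-- Hyperbolic distance in the Poincaré ball model. -/
def dH {d : ℕ} (x y : E d) : ℝ :=
  arcosh (1 + 2 * ‖x - y‖ ^ 2 / ((1 - ‖x‖ ^ 2) * (1 - ‖y‖ ^ 2)))

/-- A unit-speed parameterized complete geodesic of the Poincaré ball. -/
def IsUnitSpeedGeodesic {d : ℕ} (γ : ℝ → E d) : Prop :=
  (∀ t, γ t ∈ pball d) ∧ ∀ s t : ℝ, dH (γ s) (γ t) = |s - t|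

/-- A subset of the ball which is a complete geodesic line. -/
def IsGeodesicLine {d : ℕ} (c : Set (E d)) : Prop :=
  ∃ γ : ℝ → E d, IsUnitSpeedGeodesic γ ∧ c = Set.range γ

/-- Totally geodesic subset of the Poincaré ball: it contains every complete geodesic
through any two of its points. -/
def TotGeodesic {d : ℕ} (M : Set (E d)) : Prop :=
  M ⊆ pball d ∧
    ∀ x ∈ M, ∀ y ∈ M, x ≠ y →
      ∀ c : Set (E d), IsGeodesicLine c → x ∈ c → y ∈ c → c ⊆ M

/-- Geodesic hull of a set `S` of points of the ball and/or ideal boundary points: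
the smallest totally geodesic subset containing the ball-points of `S` and whose
closure contains all of `S` (in particular the ideal points of `S`). -/
def GH {d : ℕ} (S : Set (E d)) : Set (E d) :=
  ⋂₀ {M : Set (E d) | TotGeodesic M ∧ S ∩ pball d ⊆ M ∧ S ⊆ closure M}

/-- Busemann function of the ideal point `p`. -/
def busemann {d : ℕ} (p x : E d) : ℝ := Real.log (‖p - x‖ ^ 2 / (1 - ‖x‖ ^ 2))

/-- Horosphere centered at the ideal point `p` passing through `x`. -/
def horosphere {d : ℕ} (p x : E d) : Set (E d) :=
  {y ∈ pball d | busemann p y = busemann p x}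

/-- `S(x)`: intersection of the horospheres through `x` centered at the ideal points `p i`. -/
def horoInter {d K : ℕ} (p : Fin K → E d) (x : E d) : Set (E d) :=
  ⋂ i, horosphere (p i) x

/-- Isometry of hyperbolic space (Poincaré ball model). -/
def IsHypIsometry {d : ℕ} (φ : E d → E d) : Prop :=
  Set.BijOn φ (pball d) (pball d) ∧
    ∀ x ∈ pball d, ∀ y ∈ pball d, dH (φ x) (φ y) = dH x y

/-- A rotation around `P`: an isometry of `ℍ^d` fixing every point of `P`. -/
def IsRotationAround {d : ℕ} (P : Set (E d)) (φ : E d → E d) : Prop :=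
  IsHypIsometry φ ∧ ∀ q ∈ P, φ q = q

/-- `m` is a nearest point of `M` to `x`. -/
def IsNearestPt {d : ℕ} (M : Set (E d)) (x m : E d) : Prop :=
  m ∈ M ∧ ∀ y ∈ M, dH x m ≤ dH x y

/-- `π` is the geodesic (closest-point) projection onto `M`. -/
def IsGeodProj {d : ℕ} (M : Set (E d)) (π : E d → E d) : Prop :=
  ∀ x ∈ pball d, IsNearestPt M x (π x)

/-- `π` is the horospherical projection determined by the base point `b` and the
ideal points `p 0, …, p (K-1)`: it sends `x` to the point of
`GH(b,p₁,…,p_K) ∩ S(x)` strictly closer to `b` (and fixes the spine pointwise). -/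
def IsHoroProj {d K : ℕ} (b : E d) (p : Fin K → E d) (π : E d → E d) : Prop :=
  ∀ x ∈ pball d,
    π x ∈ GH (insert b (Set.range p)) ∩ horoInter p x ∧
    (∀ z ∈ GH (insert b (Set.range p)) ∩ horoInter p x, z ≠ π x → dH b (π x) < dH b z) ∧
    (x ∈ GH (Set.range p) → π x = x)

/-- Tangent directions at `c` of unit-speed geodesics contained in `M`. -/
def tangentDirs {d : ℕ} (M : Set (E d)) (c : E d) : Set (E d) :=
  {v | ∃ γ : ℝ → E d, IsUnitSpeedGeodesic γ ∧ Set.range γ ⊆ M ∧ γ 0 = c ∧ HasDerivAt γ v 0}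

/-- `x` and `y` lie on the same side of `L` inside the ball. -/
def SameSide {d : ℕ} (L : Set (E d)) (x y : E d) : Prop :=
  ∃ C : Set (E d), IsConnected C ∧ C ⊆ pball d \ L ∧ x ∈ C ∧ y ∈ C

/-- The (closed) half of `M` bounded by `P` that contains `b`. -/
def halfOf {d : ℕ} (M P : Set (E d)) (b : E d) : Set (E d) :=
  P ∪ connectedComponentIn (M \ P) b

/-- Hyperbolic length of a path `γ` with derivative `γ'` over `[a, b]`. -/
def hypLen {d : ℕ} (γ γ' : ℝ → E d) (a b : ℝ) : ℝ :=
  ∫ t in a..b, 2 * ‖γ' t‖ / (1 - ‖γ t‖ ^ 2)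

/-- `N ⊆ ℝ^d` is a `k`-dimensional topological submanifold (without boundary). -/
def IsTopSubmanifoldOfDim {d : ℕ} (k : ℕ) (N : Set (E d)) : Prop :=
  ∀ y ∈ N, ∃ U : Set (E d), IsOpen U ∧ y ∈ U ∧
    ∃ V : Set (EuclideanSpace ℝ (Fin k)), IsOpen V ∧ Nonempty (↥(U ∩ N) ≃ₜ ↥V)

/-- The model (closed) half-space of `ℝ^k`. -/
def modelHalfSpace (k : ℕ) : Set (EuclideanSpace ℝ (Fin k)) :=
  {v | ∀ i : Fin k, (i : ℕ) = 0 → 0 ≤ v i}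

/-- `N ⊆ ℝ^d` is a `k`-dimensional topological submanifold with boundary. -/
def IsTopSubmanifoldWithBdryOfDim {d : ℕ} (k : ℕ) (N : Set (E d)) : Prop :=
  ∀ y ∈ N, ∃ U : Set (E d), IsOpen U ∧ y ∈ U ∧
    ∃ V : Set (EuclideanSpace ℝ (Fin k)),
      (∃ W : Set (EuclideanSpace ℝ (Fin k)), IsOpen W ∧ V = W ∩ modelHalfSpace k) ∧
      Nonempty (↥(U ∩ N) ≃ₜ ↥V)

/-- Geodesically convex subset of the ball. -/
def GeodConvex {d : ℕ} (N : Set (E d)) : Prop :=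
  N ⊆ pball d ∧
    ∀ x ∈ N, ∀ y ∈ N, ∀ γ : ℝ → E d, IsUnitSpeedGeodesic γ →
      ∀ s t : ℝ, γ s = x → γ t = y → ∀ u ∈ Set.uIcc s t, γ u ∈ N

namespace GPA

variable {d : ℕ}

/-- The "cosh of distance" quantity. -/
def cd (x y : E d) : ℝ := 1 + 2 * ‖x - y‖ ^ 2 / ((1 - ‖x‖ ^ 2) * (1 - ‖y‖ ^ 2))

lemma dH_eq (x y : E d) : dH x y = arcosh (cd x y) := rfl

lemma pball_pos {x : E d} (hx : x ∈ pball d) : 0 < 1 - ‖x‖ ^ 2 := by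
  have : ‖x‖ < 1 := hx
  nlinarith [norm_nonneg x]

lemma one_le_cd {x y : E d} (hx : x ∈ pball d) (hy : y ∈ pball d) : 1 ≤ cd x y := by
  have h1 := pball_pos hx
  have h2 := pball_pos hy
  have : 0 ≤ 2 * ‖x - y‖ ^ 2 / ((1 - ‖x‖ ^ 2) * (1 - ‖y‖ ^ 2)) := by positivity
  simp only [cd]; linarith

lemma one_lt_cd {x y : E d} (hx : x ∈ pball d) (hy : y ∈ pball d) (hxy : x ≠ y) :
    1 < cd x y := by
  have h1 := pball_pos hx
  have h2 := pball_pos hy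
  have h3 : 0 < ‖x - y‖ := by
    rw [norm_pos_iff]; exact sub_ne_zero.mpr hxy
  have : 0 < 2 * ‖x - y‖ ^ 2 / ((1 - ‖x‖ ^ 2) * (1 - ‖y‖ ^ 2)) := by positivity
  simp only [cd]; linarith

lemma cosh_arcosh {t : ℝ} (ht : 1 ≤ t) : Real.cosh (arcosh t) = t := by
  have h1 : (0:ℝ) ≤ t ^ 2 - 1 := by nlinarith
  have hs : Real.sqrt (t ^ 2 - 1) ^ 2 = t ^ 2 - 1 := Real.sq_sqrt h1
  have hpos : 0 < t + Real.sqrt (t ^ 2 - 1) := by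
    have := Real.sqrt_nonneg (t ^ 2 - 1); linarith
  rw [arcosh, Real.cosh_eq, Real.exp_log hpos, Real.exp_neg, Real.exp_log hpos]
  rw [div_eq_iff (by norm_num : (2:ℝ) ≠ 0), eq_comm]
  field_simp
  nlinarith [hs]

lemma arcosh_nonneg {t : ℝ} (ht : 1 ≤ t) : 0 ≤ arcosh t :=
  Real.log_nonneg (by linarith [Real.sqrt_nonneg (t ^ 2 - 1)])

lemma arcosh_pos {t : ℝ} (ht : 1 < t) : 0 < arcosh t :=
  Real.log_pos (by linarith [Real.sqrt_nonneg (t ^ 2 - 1)])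

lemma arcosh_one : arcosh 1 = 0 := by
  simp [arcosh]

lemma arcosh_cosh (u : ℝ) : arcosh (Real.cosh u) = |u| := by
  rw [arcosh]
  have h1 : Real.cosh u ^ 2 - 1 = Real.sinh u ^ 2 := by rw [Real.cosh_sq]; ring
  rw [h1, Real.sqrt_sq_eq_abs]
  have habs : |Real.sinh u| = Real.sinh |u| := by
    rcases le_total 0 u with h | h
    · rw [abs_of_nonneg (Real.sinh_nonneg_iff.2 h), abs_of_nonneg h]
    · rw [abs_of_nonpos (Real.sinh_nonpos_iff.2 h), abs_of_nonpos h, Real.sinh_neg]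
  rw [habs, ← Real.cosh_abs u, Real.cosh_add_sinh, Real.log_exp]

lemma dH_nonneg {x y : E d} (hx : x ∈ pball d) (hy : y ∈ pball d) : 0 ≤ dH x y := by
  rw [dH_eq]; exact arcosh_nonneg (one_le_cd hx hy)

lemma cosh_dH {x y : E d} (hx : x ∈ pball d) (hy : y ∈ pball d) :
    Real.cosh (dH x y) = cd x y := by
  rw [dH_eq]; exact cosh_arcosh (one_le_cd hx hy)

lemma cd_self (x : E d) : cd x x = 1 := by simp [cd]

-- ### Minkowski form on ℝ × E d
def mink (u v : ℝ × E d) : ℝ := u.1 * v.1 - inner ℝ u.2 v.2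

lemma mink_comm (u v : ℝ × E d) : mink u v = mink v u := by
  simp only [mink, real_inner_comm]; ring

lemma mink_add_left (u v w : ℝ × E d) : mink (u + v) w = mink u w + mink v w := by
  simp only [mink, Prod.fst_add, Prod.snd_add, inner_add_left]; ring

lemma mink_add_right (u v w : ℝ × E d) : mink u (v + w) = mink u v + mink u w := by
  simp only [mink, Prod.fst_add, Prod.snd_add, inner_add_right]; ring

lemma mink_sub_left (u v w : ℝ × E d) : mink (u - v) w = mink u w - mink v w := by
  simp only [mink, Prod.fst_sub, Prod.snd_sub, inner_sub_left]; ring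

lemma mink_sub_right (u v w : ℝ × E d) : mink u (v - w) = mink u v - mink u w := by
  simp only [mink, Prod.fst_sub, Prod.snd_sub, inner_sub_right]; ring

lemma mink_smul_left (t : ℝ) (u v : ℝ × E d) : mink (t • u) v = t * mink u v := by
  simp only [mink, Prod.smul_fst, Prod.smul_snd, real_inner_smul_left, smul_eq_mul]; ring

lemma mink_smul_right (t : ℝ) (u v : ℝ × E d) : mink u (t • v) = t * mink u v := by
  simp only [mink, Prod.smul_fst, Prod.smul_snd, real_inner_smul_right, smul_eq_mul]; ring

-- ### between ball and hyperboloid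
def toHyp (x : E d) : ℝ × E d := ((1 + ‖x‖ ^ 2) / (1 - ‖x‖ ^ 2), (2 / (1 - ‖x‖ ^ 2)) • x)

def fromHyp (X : ℝ × E d) : E d := (1 / (1 + X.1)) • X.2

lemma mink_toHyp {x y : E d} (hx : x ∈ pball d) (hy : y ∈ pball d) :
    mink (toHyp x) (toHyp y) = cd x y := by
  have h1 := pball_pos hx
  have h2 := pball_pos hy
  simp only [mink, toHyp, cd, real_inner_smul_left, real_inner_smul_right]
  rw [norm_sub_sq_real]
  field_simp
  ring

lemma mink_self_toHyp {x : E d} (hx : x ∈ pball d) : mink (toHyp x) (toHyp x) = 1 := by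
  rw [mink_toHyp hx hx]; simp [cd]

lemma toHyp_fst_pos {x : E d} (hx : x ∈ pball d) : 0 < (toHyp x).1 := by
  have h1 := pball_pos hx
  have : (0:ℝ) < 1 + ‖x‖ ^ 2 := by positivity
  exact div_pos this h1

lemma fromHyp_toHyp {x : E d} (hx : x ∈ pball d) : fromHyp (toHyp x) = x := by
  have h : (0:ℝ) < 1 - ‖x‖ ^ 2 := pball_pos hx
  simp only [fromHyp, toHyp, smul_smul]
  have hmain : 1 + (1 + ‖x‖ ^ 2) / (1 - ‖x‖ ^ 2) = 2 / (1 - ‖x‖ ^ 2) := by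
    field_simp; ring
  have h2 : 1 / (1 + (1 + ‖x‖ ^ 2) / (1 - ‖x‖ ^ 2)) * (2 / (1 - ‖x‖ ^ 2)) = 1 := by
    rw [hmain, one_div, inv_mul_cancel₀ (by positivity)]
  rw [h2, one_smul]

lemma hyp_facts {X : ℝ × E d} (hXX : mink X X = 1) (hX1 : 0 < X.1) :
    fromHyp X ∈ pball d ∧ toHyp (fromHyp X) = X := by
  have hn2 : ‖X.2‖ ^ 2 = X.1 ^ 2 - 1 := by
    have h := hXX
    simp only [mink, real_inner_self_eq_norm_sq] at h
    nlinarith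
  have h1 : 1 ≤ X.1 := by nlinarith [sq_nonneg ‖X.2‖]
  have hd : (0:ℝ) < 1 + X.1 := by linarith
  have hfn : ‖fromHyp X‖ ^ 2 = (X.1 - 1) / (X.1 + 1) := by
    rw [fromHyp, norm_smul, mul_pow, Real.norm_eq_abs, sq_abs, hn2]
    rw [eq_div_iff (by linarith : X.1 + 1 ≠ 0)]
    field_simp
    ring
  have hmem : fromHyp X ∈ pball d := by
    have hlt : ‖fromHyp X‖ ^ 2 < 1 := by
      rw [hfn, div_lt_one (by linarith)]; linarith
    have : ‖fromHyp X‖ < 1 := by nlinarith [norm_nonneg (fromHyp X)]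
    exact this
  refine ⟨hmem, ?_⟩
  have hne : X.1 + 1 ≠ 0 := by linarith
  have hone_sub : 1 - ‖fromHyp X‖ ^ 2 = 2 / (X.1 + 1) := by
    rw [hfn]; field_simp; ring
  have hone_add : 1 + ‖fromHyp X‖ ^ 2 = 2 * X.1 / (X.1 + 1) := by
    rw [hfn]; field_simp; ring
  have hfst : (toHyp (fromHyp X)).1 = X.1 := by
    simp only [toHyp, hone_sub, hone_add]
    field_simp
  have hsnd : (toHyp (fromHyp X)).2 = X.2 := by
    simp only [toHyp]
    rw [hone_sub]
    simp only [fromHyp, smul_smul]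
    have hs : 2 / (2 / (X.1 + 1)) * (1 / (1 + X.1)) = 1 := by
      rw [div_div_eq_mul_div]
      field_simp
      ring
    rw [hs, one_smul]
  exact Prod.ext hfst hsnd

-- ### negative definiteness and Cauchy-Schwarz on the complement of a timelike vector
lemma negdef {P u : ℝ × E d} (hPP : mink P P = 1) (hP1 : 0 < P.1)
    (hu : mink u P = 0) : mink u u ≤ 0 := by
  have hcs := real_inner_mul_inner_self_le u.2 P.2
  simp only [mink, real_inner_self_eq_norm_sq] at hPP hu hcs ⊢
  have hu' : u.1 * P.1 = (inner ℝ u.2 P.2 : ℝ) := by linarith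
  have husq : u.1 ^ 2 * P.1 ^ 2 = (inner ℝ u.2 P.2 : ℝ) ^ 2 := by rw [← hu']; ring
  nlinarith [hcs, husq, sq_nonneg ‖u.2‖, mul_pos hP1 hP1]

lemma mink_CS {P u w : ℝ × E d} (hPP : mink P P = 1) (hP1 : 0 < P.1)
    (hu : mink u P = 0) (hw : mink w P = 0) :
    mink u w ^ 2 ≤ mink u u * mink w w := by
  have key : ∀ t : ℝ, mink u u + 2 * t * mink u w + t ^ 2 * mink w w ≤ 0 := by
    intro t
    have h1 : mink (u + t • w) P = 0 := by
      rw [mink_add_left, mink_smul_left, hu, hw]; ring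
    have h2 := negdef hPP hP1 h1
    have expand : mink (u + t • w) (u + t • w)
        = mink u u + 2 * t * mink u w + t ^ 2 * mink w w := by
      simp only [mink_add_left, mink_add_right, mink_smul_left, mink_smul_right]
      rw [mink_comm w u]; ring
    linarith [expand ▸ h2]
  rcases lt_or_eq_of_le (negdef hPP hP1 hw) with hneg | h0
  · set t₀ := -(mink u w) / (mink w w) with ht₀
    have hne : mink w w ≠ 0 := ne_of_lt hneg
    have h3 : mink u u + 2 * t₀ * mink u w + t₀ ^ 2 * mink w w
        = mink u u - mink u w ^ 2 / mink w w := by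
      rw [ht₀]; field_simp; ring
    have h1 : mink u u - mink u w ^ 2 / mink w w ≤ 0 := h3 ▸ key t₀
    have h4 : mink u u ≤ mink u w ^ 2 / mink w w := by linarith
    exact (le_div_iff_of_neg hneg).mp h4
  · have hB : mink u w = 0 := by
      by_contra hB
      have h1 := key ((1 - mink u u) / (2 * mink u w))
      rw [h0, mul_zero, add_zero] at h1
      have h2 : 2 * ((1 - mink u u) / (2 * mink u w)) * mink u w = 1 - mink u u := by
        field_simp
      nlinarith [h1, h2]
    rw [hB, h0]
    norm_num

-- ### vanishing derivative at an interior minimum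
lemma deriv_zero {A B : ℝ} (hA : 0 < A)
    (h : ∀ s : ℝ, A ≤ Real.sqrt (1 + s ^ 2) * A + s * B) : B = 0 := by
  have key : ∀ s : ℝ, 0 ≤ A * s ^ 2 + B * s := by
    intro s
    have h1 := h s
    have h2 : Real.sqrt (1 + s ^ 2) ≤ 1 + s ^ 2 := by
      nlinarith [Real.sq_sqrt (by positivity : (0:ℝ) ≤ 1 + s ^ 2),
        Real.sqrt_nonneg (1 + s ^ 2), sq_nonneg (Real.sqrt (1 + s ^ 2) - 1), sq_nonneg s]
    nlinarith [mul_le_mul_of_nonneg_right h2 hA.le]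
  have hk := key (-B / (2 * A))
  have h4 : A * (-B / (2 * A)) ^ 2 + B * (-B / (2 * A)) = -(B ^ 2) / (4 * A) := by
    field_simp; ring
  have h5 : B ^ 2 ≤ 0 := by
    rw [h4] at hk
    have h6 : 0 ≤ -B ^ 2 / (4 * A) * (4 * A) := mul_nonneg hk (by positivity)
    rw [div_mul_cancel₀ _ (by positivity : (4:ℝ) * A ≠ 0)] at h6
    linarith
  have : B ^ 2 = 0 := le_antisymm h5 (sq_nonneg B)
  exact pow_eq_zero_iff (by norm_num) |>.mp this

-- ### the geodesic construction
lemma geod {P V : ℝ × E d} (hPP : mink P P = 1) (hVV : mink V V = -1)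
    (hPV : mink P V = 0) (hP1 : 0 < P.1) :
    (∀ s t : ℝ, mink (Real.cosh s • P + Real.sinh s • V) (Real.cosh t • P + Real.sinh t • V)
        = Real.cosh (s - t)) ∧
    (∀ t : ℝ, 0 < (Real.cosh t • P + Real.sinh t • V).1) ∧
    (∀ t : ℝ, fromHyp (Real.cosh t • P + Real.sinh t • V) ∈ pball d) ∧
    (∀ t : ℝ, toHyp (fromHyp (Real.cosh t • P + Real.sinh t • V))
        = Real.cosh t • P + Real.sinh t • V) := by
  have hVP : mink V P = 0 := by rw [mink_comm]; exact hPV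
  have hVsq : V.1 ^ 2 ≤ P.1 ^ 2 - 1 := by
    have hcs := real_inner_mul_inner_self_le V.2 P.2
    simp only [mink, real_inner_self_eq_norm_sq] at hPP hVV hVP hcs
    have hv' : V.1 * P.1 = (inner ℝ V.2 P.2 : ℝ) := by linarith
    have hvsq : V.1 ^ 2 * P.1 ^ 2 = (inner ℝ V.2 P.2 : ℝ) ^ 2 := by rw [← hv']; ring
    nlinarith [hcs, hvsq, mul_pos hP1 hP1, sq_nonneg ‖V.2‖, sq_nonneg V.1]
  have hmst : ∀ s t : ℝ, mink (Real.cosh s • P + Real.sinh s • V)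
      (Real.cosh t • P + Real.sinh t • V) = Real.cosh (s - t) := by
    intro s t
    simp only [mink_add_left, mink_add_right, mink_smul_left, mink_smul_right,
      hPP, hVV, hPV, hVP]
    rw [Real.cosh_sub]; ring
  have hself : ∀ t : ℝ, mink (Real.cosh t • P + Real.sinh t • V)
      (Real.cosh t • P + Real.sinh t • V) = 1 := by
    intro t; rw [hmst t t, sub_self, Real.cosh_zero]
  have hpos : ∀ t : ℝ, 0 < (Real.cosh t • P + Real.sinh t • V).1 := by
    intro t
    have hfst : (Real.cosh t • P + Real.sinh t • V).1
        = Real.cosh t * P.1 + Real.sinh t * V.1 := by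
      simp [Prod.fst_add, Prod.smul_fst]
    rw [hfst]
    have hc := Real.cosh_pos t
    have hcs := Real.cosh_sq_sub_sinh_sq t
    have hp2 : 1 ≤ P.1 ^ 2 := by nlinarith
    have hkey : (Real.cosh t ^ 2 - Real.sinh t ^ 2) * P.1 ^ 2 = P.1 ^ 2 := by
      rw [hcs]; ring
    nlinarith [mul_pos hc hP1, sq_nonneg (Real.cosh t * P.1 + Real.sinh t * V.1),
      mul_le_mul_of_nonneg_left hVsq (sq_nonneg (Real.sinh t)), hkey,
      sq_nonneg (Real.sinh t)]
  refine ⟨hmst, hpos, fun t => (hyp_facts (hself t) (hpos t)).1,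
    fun t => (hyp_facts (hself t) (hpos t)).2⟩

-- ### pure real arithmetic core
lemma arith_core {a c cL z R : ℝ} (h1cL : 1 ≤ cL) (hR : 0 < R) (h1R : 1 ≤ R)
    (ha : R ≤ a) (hc : R ≤ c) (hzsq : z ^ 2 ≤ (1 - a ^ 2) * (1 - c ^ 2)) :
    R ^ 2 * (cL - 1) ≤ a * c * cL + z - 1 := by
  have ha1 : 1 ≤ a := h1R.trans ha
  have hc1 : 1 ≤ c := h1R.trans hc
  have hac1 : 1 ≤ a * c := by nlinarith
  have hz2 : (1 - a ^ 2) * (1 - c ^ 2) ≤ (a * c - 1) ^ 2 := by nlinarith [sq_nonneg (a - c)]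
  have hzlow : 1 - a * c ≤ z := by
    nlinarith [hzsq, hz2, sq_nonneg (z + (a * c - 1)), hac1]
  have hac : R * R ≤ a * c := mul_le_mul ha hc hR.le (by linarith)
  have h8 : 0 ≤ (a * c - R * R) * (cL - 1) := mul_nonneg (by linarith) (by linarith)
  nlinarith [h8, hzlow]

-- ### the core quadrilateral inequality, in the Minkowski model
lemma final_ineq {X Y P Q V : ℝ × E d} (cL sL R : ℝ)
    (hXX : mink X X = 1) (hYY : mink Y Y = 1)
    (hPP : mink P P = 1) (hQQ : mink Q Q = 1)
    (hP1 : 0 < P.1) (hPV : mink P V = 0) (hVV : mink V V = -1)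
    (hQ : Q = cL • P + sL • V) (h1cL : 1 ≤ cL)
    (hXV : mink X V = 0) (hYU : sL * mink Y P + cL * mink Y V = 0)
    (hR : 0 < R) (h1R : 1 ≤ R)
    (hXP : R ≤ mink X P) (hYQc : R ≤ mink Y Q) :
    R ^ 2 * (cL - 1) ≤ mink X Y - 1 := by
  have hPQval : mink P Q = cL := by
    rw [hQ, mink_add_right, mink_smul_right, mink_smul_right, hPP, hPV]; ring
  have hcs : cL ^ 2 - sL ^ 2 = 1 := by
    have h := hQQ
    rw [hQ] at h
    simp only [mink_add_left, mink_add_right, mink_smul_left, mink_smul_right] at h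
    rw [mink_comm V P] at h
    rw [hPP, hVV, hPV] at h
    nlinarith [h]
  have e1 : mink Y Q = cL * mink Y P + sL * mink Y V := by
    rw [hQ, mink_add_right, mink_smul_right, mink_smul_right]
  have hYP : mink Y P = mink Y Q * cL := by
    linear_combination (-cL) * e1 + (-sL) * hYU + (-(mink Y P)) * hcs
  have hXPP : mink (X - mink X P • P) P = 0 := by
    rw [mink_sub_left, mink_smul_left, hPP]; ring
  have hXPV : mink (X - mink X P • P) V = 0 := by
    rw [mink_sub_left, mink_smul_left, hPV, hXV]; ring
  have hYQP : mink (Y - mink Y Q • Q) P = 0 := by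
    rw [mink_sub_left, mink_smul_left, mink_comm Q P, hPQval, hYP]; ring
  have hXPXP : mink (X - mink X P • P) (X - mink X P • P) = 1 - mink X P ^ 2 := by
    simp only [mink_sub_left, mink_sub_right, mink_smul_left, mink_smul_right]
    rw [mink_comm P X, hXX, hPP]; ring
  have hYQYQ : mink (Y - mink Y Q • Q) (Y - mink Y Q • Q) = 1 - mink Y Q ^ 2 := by
    simp only [mink_sub_left, mink_sub_right, mink_smul_left, mink_smul_right]
    rw [mink_comm Q Y, hYY, hQQ]; ring
  have hXQ : mink X Q = cL * mink X P := by
    rw [hQ, mink_add_right, mink_smul_right, mink_smul_right, hXV]; ring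
  have hPY : mink P Y = mink Y Q * cL := by rw [mink_comm, hYP]
  have hdecomp : mink (X - mink X P • P) (Y - mink Y Q • Q)
      = mink X Y - mink X P * mink Y Q * cL := by
    simp only [mink_sub_left, mink_sub_right, mink_smul_left, mink_smul_right]
    rw [hXQ, hPY, hPQval]; ring
  have hcs2 := mink_CS hPP hP1 hXPP hYQP
  rw [hXPXP, hYQYQ, hdecomp] at hcs2
  have hkey := arith_core h1cL hR h1R hXP hYQc hcs2
  linarith [hkey]

lemma cosh_half (u : ℝ) : Real.cosh u = 1 + 2 * Real.sinh (u / 2) ^ 2 := by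
  have h := Real.cosh_two_mul (u / 2)
  have h2 := Real.cosh_sq (u / 2)
  have h3 : 2 * (u / 2) = u := by ring
  rw [h3] at h
  rw [h, h2]; ring

end GPA

set_option maxHeartbeats 1000000 in
/-- Let `M ⊆ ℍ^d` be a totally geodesic submanifold and let
`x, y ∈ ℍ^d` lie at hyperbolic distance at least `r ≥ 0` from `M`. Setting
`d = d_ℍ(x,y)` and `d' = d_ℍ(π^G_M(x), π^G_M(y))` for the geodesic (closest-point)
projections onto `M`, one has `sinh(d'/2) ≤ sinh(d/2) / cosh r`. -/


theorem geodesic_proj_distance_bound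
    {d : ℕ} (M : Set (E d)) (hM : TotGeodesic M)
    (r : ℝ) (hr : 0 ≤ r)
    (x y : E d) (hx : x ∈ pball d) (hy : y ∈ pball d)
    (hxr : ∀ m ∈ M, r ≤ dH x m) (hyr : ∀ m ∈ M, r ≤ dH y m)
    (px py : E d) (hpx : IsNearestPt M x px) (hpy : IsNearestPt M y py) :
    Real.sinh (dH px py / 2) ≤ Real.sinh (dH x y / 2) / Real.cosh r := by
  have hpxb : px ∈ pball d := hM.1 hpx.1
  have hpyb : py ∈ pball d := hM.1 hpy.1
  have hsd2 : 0 ≤ Real.sinh (dH x y / 2) := by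
    rw [Real.sinh_nonneg_iff]
    linarith [GPA.dH_nonneg hx hy]
  by_cases hpq : px = py
  · subst hpq
    have h0 : dH px px = 0 := by rw [GPA.dH_eq, GPA.cd_self, GPA.arcosh_one]
    rw [h0]
    simpa using div_nonneg hsd2 (Real.cosh_pos r).le
  · have hcdL : 1 < GPA.cd px py := GPA.one_lt_cd hpxb hpyb hpq
    have hLpos : 0 < dH px py := by rw [GPA.dH_eq]; exact GPA.arcosh_pos hcdL
    have hcoshL : Real.cosh (dH px py) = GPA.cd px py := GPA.cosh_dH hpxb hpyb
    have hsLpos : 0 < Real.sinh (dH px py) := Real.sinh_pos_iff.2 hLpos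
    have hPP := GPA.mink_self_toHyp hpxb
    have hQQ := GPA.mink_self_toHyp hpyb
    have hXX := GPA.mink_self_toHyp hx
    have hYY := GPA.mink_self_toHyp hy
    have hPQ : GPA.mink (GPA.toHyp px) (GPA.toHyp py) = Real.cosh (dH px py) := by
      rw [GPA.mink_toHyp hpxb hpyb, hcoshL]
    have hP1 : 0 < (GPA.toHyp px).1 := GPA.toHyp_fst_pos hpxb
    set V := (Real.sinh (dH px py))⁻¹ •
      (GPA.toHyp py - Real.cosh (dH px py) • GPA.toHyp px) with hVdef
    have hQdec : GPA.toHyp py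
        = Real.cosh (dH px py) • GPA.toHyp px + Real.sinh (dH px py) • V := by
      rw [hVdef, smul_smul, mul_inv_cancel₀ (ne_of_gt hsLpos), one_smul]
      abel
    have hPV : GPA.mink (GPA.toHyp px) V = 0 := by
      rw [hVdef, GPA.mink_smul_right, GPA.mink_sub_right, GPA.mink_smul_right, hPQ, hPP]
      ring
    have hVV : GPA.mink V V = -1 := by
      have h := hQQ
      rw [hQdec] at h
      simp only [GPA.mink_add_left, GPA.mink_add_right, GPA.mink_smul_left,
        GPA.mink_smul_right] at h
      rw [GPA.mink_comm V (GPA.toHyp px), hPP, hPV] at h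
      have hid := Real.cosh_sq_sub_sinh_sq (dH px py)
      have h3 : Real.sinh (dH px py) ^ 2 * (GPA.mink V V + 1) = 0 := by
        linear_combination h - hid
      rcases mul_eq_zero.mp h3 with h4 | h4
      · exact absurd h4 (pow_ne_zero 2 (ne_of_gt hsLpos))
      · linarith
    obtain ⟨hmst, hfstpos, hball, hto⟩ := GPA.geod hPP hVV hPV hP1
    set γ : ℝ → E d := fun t =>
      GPA.fromHyp (Real.cosh t • GPA.toHyp px + Real.sinh t • V) with hγdef
    have hballγ : ∀ t, γ t ∈ pball d := by
      intro t; simp only [hγdef]; exact hball t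
    have hgeo : IsUnitSpeedGeodesic γ := by
      refine ⟨hballγ, fun s t => ?_⟩
      rw [GPA.dH_eq]
      have hcd : GPA.cd (γ s) (γ t) = Real.cosh (s - t) := by
        rw [← GPA.mink_toHyp (hballγ s) (hballγ t)]
        simp only [hγdef]
        rw [hto s, hto t]
        exact hmst s t
      rw [hcd]
      exact GPA.arcosh_cosh (s - t)
    have hγ0 : γ 0 = px := by
      simp only [hγdef, Real.cosh_zero, Real.sinh_zero, one_smul, zero_smul, add_zero]
      exact GPA.fromHyp_toHyp hpxb
    have hγL : γ (dH px py) = py := by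
      simp only [hγdef]
      rw [← hQdec]
      exact GPA.fromHyp_toHyp hpyb
    have hrange : Set.range γ ⊆ M :=
      hM.2 px hpx.1 py hpy.1 hpq (Set.range γ) ⟨γ, hgeo, rfl⟩ ⟨0, hγ0⟩ ⟨dH px py, hγL⟩
    have hXP_ge : Real.cosh r ≤ GPA.mink (GPA.toHyp x) (GPA.toHyp px) := by
      rw [GPA.mink_toHyp hx hpxb, ← GPA.cosh_dH hx hpxb]
      rw [Real.cosh_le_cosh, abs_of_nonneg hr, abs_of_nonneg (GPA.dH_nonneg hx hpxb)]
      exact hxr px hpx.1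
    have hYQ_ge : Real.cosh r ≤ GPA.mink (GPA.toHyp y) (GPA.toHyp py) := by
      rw [GPA.mink_toHyp hy hpyb, ← GPA.cosh_dH hy hpyb]
      rw [Real.cosh_le_cosh, abs_of_nonneg hr, abs_of_nonneg (GPA.dH_nonneg hy hpyb)]
      exact hyr py hpy.1
    have hXV : GPA.mink (GPA.toHyp x) V = 0 := by
      apply GPA.deriv_zero ((Real.cosh_pos r).trans_le hXP_ge)
      intro s
      have hmem : γ (Real.arsinh s) ∈ M := hrange ⟨_, rfl⟩
      have hd := hpx.2 (γ (Real.arsinh s)) hmem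
      have hcc : Real.cosh (dH x px) ≤ Real.cosh (dH x (γ (Real.arsinh s))) := by
        rw [Real.cosh_le_cosh, abs_of_nonneg (GPA.dH_nonneg hx hpxb),
          abs_of_nonneg (GPA.dH_nonneg hx (hballγ _))]
        exact hd
      rw [GPA.cosh_dH hx hpxb, GPA.cosh_dH hx (hballγ _)] at hcc
      rw [← GPA.mink_toHyp hx hpxb, ← GPA.mink_toHyp hx (hballγ _)] at hcc
      simp only [hγdef] at hcc
      rw [hto (Real.arsinh s)] at hcc
      rw [GPA.mink_add_right, GPA.mink_smul_right, GPA.mink_smul_right] at hcc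
      rw [Real.cosh_arsinh, Real.sinh_arsinh] at hcc
      exact hcc
    have hYU : Real.sinh (dH px py) * GPA.mink (GPA.toHyp y) (GPA.toHyp px)
        + Real.cosh (dH px py) * GPA.mink (GPA.toHyp y) V = 0 := by
      have e1 : GPA.mink (GPA.toHyp y) (GPA.toHyp py)
          = Real.cosh (dH px py) * GPA.mink (GPA.toHyp y) (GPA.toHyp px)
            + Real.sinh (dH px py) * GPA.mink (GPA.toHyp y) V := by
        conv_lhs => rw [hQdec]
        rw [GPA.mink_add_right, GPA.mink_smul_right, GPA.mink_smul_right]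
      apply GPA.deriv_zero ((Real.cosh_pos r).trans_le hYQ_ge)
      intro s
      have hmem : γ (dH px py + Real.arsinh s) ∈ M := hrange ⟨_, rfl⟩
      have hd := hpy.2 (γ (dH px py + Real.arsinh s)) hmem
      have hcc : Real.cosh (dH y py) ≤ Real.cosh (dH y (γ (dH px py + Real.arsinh s))) := by
        rw [Real.cosh_le_cosh, abs_of_nonneg (GPA.dH_nonneg hy hpyb),
          abs_of_nonneg (GPA.dH_nonneg hy (hballγ _))]
        exact hd
      rw [GPA.cosh_dH hy hpyb, GPA.cosh_dH hy (hballγ _)] at hcc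
      rw [← GPA.mink_toHyp hy hpyb, ← GPA.mink_toHyp hy (hballγ _)] at hcc
      simp only [hγdef] at hcc
      rw [hto (dH px py + Real.arsinh s)] at hcc
      rw [GPA.mink_add_right, GPA.mink_smul_right, GPA.mink_smul_right] at hcc
      have erhs : Real.cosh (dH px py + Real.arsinh s)
            * GPA.mink (GPA.toHyp y) (GPA.toHyp px)
          + Real.sinh (dH px py + Real.arsinh s) * GPA.mink (GPA.toHyp y) V
          = Real.sqrt (1 + s ^ 2) * GPA.mink (GPA.toHyp y) (GPA.toHyp py)
            + s * (Real.sinh (dH px py) * GPA.mink (GPA.toHyp y) (GPA.toHyp px)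
              + Real.cosh (dH px py) * GPA.mink (GPA.toHyp y) V) := by
        rw [Real.cosh_add, Real.sinh_add, Real.cosh_arsinh, Real.sinh_arsinh, e1]
        ring
      rw [erhs] at hcc
      exact hcc
    have hfinal := GPA.final_ineq (Real.cosh (dH px py)) (Real.sinh (dH px py))
      (Real.cosh r) hXX hYY hPP hQQ hP1 hPV hVV hQdec (Real.one_le_cosh _) hXV hYU
      (Real.cosh_pos r) (Real.one_le_cosh r) hXP_ge hYQ_ge
    have hXY : GPA.mink (GPA.toHyp x) (GPA.toHyp y) = Real.cosh (dH x y) := by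
      rw [GPA.mink_toHyp hx hy, GPA.cosh_dH hx hy]
    rw [hXY] at hfinal
    have hw1 := GPA.cosh_half (dH x y)
    have hw2 := GPA.cosh_half (dH px py)
    have h9 : Real.cosh r ^ 2 * Real.sinh (dH px py / 2) ^ 2
        ≤ Real.sinh (dH x y / 2) ^ 2 := by nlinarith [hfinal, hw1, hw2]
    have hsL2 : 0 ≤ Real.sinh (dH px py / 2) := by
      rw [Real.sinh_nonneg_iff]; linarith
    have h10 : Real.cosh r * Real.sinh (dH px py / 2) ≤ Real.sinh (dH x y / 2) := by
      nlinarith [h9, hsL2, hsd2, Real.cosh_pos r]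
    rw [le_div_iff₀ (Real.cosh_pos r)]
    nlinarith [h10]
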